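/- Let n be a positive integer and let s, t ∈ {1,…,n−1} with s + t ≤ n and gcd(s, t) = 1. Then for any S, T ⊆ {1,…,n−1} with s ∈ S and t ∈ T, the Toeplitz matrix T_n⟨S; T⟩ has matrix period gcd{s'+t' : s'∈S, t'∈T} / gcd(S ∪ T), and in particular if additionally gcd(S+T) = 1 then T_n⟨S; T⟩ has some power equal to the all-ones matrix (eventually A^m = J). -/

import Mathlib

/-- gcd of all sums `s + t` with `s ∈ S`, `t ∈ T`. -/
def sumGcd (S T : Finset ℕ) : ℕ := (S ×ˢ T).gcd (fun p => p.1 + p.2)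

/-- gcd of all elements of `S ∪ T`. -/
def unionGcd (S T : Finset ℕ) : ℕ := (S ∪ T).gcd id

/-- Arc of the Toeplitz digraph `D(T_n⟨S;T⟩)` on vertex set `{1,…,n}`. -/
def arc (n : ℕ) (S T : Finset ℕ) (u v : ℕ) : Prop :=
  u ∈ Finset.Icc 1 n ∧ v ∈ Finset.Icc 1 n ∧
    ((∃ s ∈ S, (v : ℤ) - u = s) ∨ (∃ t ∈ T, (u : ℤ) - v = t))

/-- There is a directed walk of length `m` from `u` to `v` in `D(T_n⟨S;T⟩)`. -/
def hasWalk (n : ℕ) (S T : Finset ℕ) (u v m : ℕ) : Prop :=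
  ∃ f : ℕ → ℕ, f 0 = u ∧ f m = v ∧ ∀ i < m, arc n S T (f i) (f (i + 1))

/-- `ℓ ∈ P_i(A)` for `A = T_n⟨S;T⟩`, where `dplus = gcd(S+T)` and `s1 = min S`. -/
def Pset (n dplus s1 : ℕ) (i : ℕ) (ℓ : ℤ) : Prop :=
  -(n : ℤ) < ℓ ∧ ℓ < n ∧ ℓ ≡ (i : ℤ) * s1 [ZMOD (dplus : ℤ)]

/-- `ℓ ∈ Q_i(A)` for `A = T_n⟨S;T⟩`. -/
def Qset (n : ℕ) (S T : Finset ℕ) (i : ℕ) (ℓ : ℤ) : Prop :=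
  -(n : ℤ) < ℓ ∧ ℓ < n ∧ ∃ a b : ℕ → ℕ,
    ((∑ s ∈ S, (a s : ℤ) * s) - ∑ t ∈ T, (b t : ℤ) * t) = ℓ ∧
    ((∑ s ∈ S, a s) + ∑ t ∈ T, b t) = i

/-- `ℓ ∈ R_i(A)` for `A = T_n⟨S;T⟩`. -/
def Rset (n : ℕ) (S T : Finset ℕ) (i : ℕ) (ℓ : ℤ) : Prop :=
  -(n : ℤ) < ℓ ∧ ℓ < n ∧ ∀ u ∈ Finset.Icc 1 n, ∀ v ∈ Finset.Icc 1 n,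
    (v : ℤ) - u = ℓ → hasWalk n S T u v i

/-- `T_n⟨S;T⟩` is walk-ensured (with `s1 = min S`). -/
def walkEnsured (n : ℕ) (S T : Finset ℕ) (s1 : ℕ) : Prop :=
  ∃ M : ℕ, 0 < M ∧ ∀ u ∈ Finset.Icc 1 n, ∀ v ∈ Finset.Icc 1 n, ∀ ℓ : ℕ, M ≤ ℓ →
    ((v : ℤ) - u ≡ (ℓ : ℤ) * s1 [ZMOD ((sumGcd S T : ℕ) : ℤ)]) → hasWalk n S T u v ℓ

lemma walk_zero (n : ℕ) (S T : Finset ℕ) (u : ℕ) : hasWalk n S T u u 0 :=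
  ⟨fun _ => u, rfl, rfl, by omega⟩

lemma walk_one {n : ℕ} {S T : Finset ℕ} {u v : ℕ} (h : arc n S T u v) :
    hasWalk n S T u v 1 := by
  refine ⟨fun i => if i = 0 then u else v, by simp, by simp, ?_⟩
  intro i hi
  interval_cases i
  simpa using h

lemma walk_trans {n : ℕ} {S T : Finset ℕ} {u v w a b : ℕ}
    (h1 : hasWalk n S T u v a) (h2 : hasWalk n S T v w b) : hasWalk n S T u w (a + b) := by
  obtain ⟨f, hf0, hfa, hf⟩ := h1
  obtain ⟨g, hg0, hgb, hg⟩ := h2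
  refine ⟨fun i => if i ≤ a then f i else g (i - a), by simp [hf0], ?_, ?_⟩
  · by_cases hb : b = 0
    · subst hb
      simp only [Nat.add_zero, le_refl, if_pos]
      rw [hfa, ← hg0, hgb]
    · have : ¬ (a + b ≤ a) := by omega
      simp only [this, if_neg, Nat.add_sub_cancel_left]
      exact hgb
  · intro i hi
    rcases lt_or_ge i a with hia | hia
    · have h1 : i ≤ a := by omega
      have h2 : i + 1 ≤ a := by omega
      simp only [h1, h2, if_pos]
      exact hf i hia
    · have hgi : (if i ≤ a then f i else g (i - a)) = g (i - a) := by
        rcases eq_or_lt_of_le hia with h | h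
        · simp [← h, hfa, ← hg0]
        · have hn : ¬ (i ≤ a) := by omega
          simp [hn]
      have h2 : ¬ (i + 1 ≤ a) := by omega
      simp only []
      rw [hgi]
      simp only [h2, if_neg]
      have : i + 1 - a = (i - a) + 1 := by omega
      rw [this]
      exact hg (i - a) (by omega)

lemma walk_mul {n : ℕ} {S T : Finset ℕ} {u a : ℕ}
    (h : hasWalk n S T u u a) : ∀ k, hasWalk n S T u u (k * a)
  | 0 => by simpa using walk_zero n S T u
  | (k+1) => by
      have := walk_trans (walk_mul h k) h
      simpa [Nat.succ_mul] using this

lemma walk_endpoints {n : ℕ} {S T : Finset ℕ} {u v m : ℕ}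
    (h : hasWalk n S T u v m) (hm : 1 ≤ m) :
    u ∈ Finset.Icc 1 n ∧ v ∈ Finset.Icc 1 n := by
  obtain ⟨f, hf0, hfm, hf⟩ := h
  constructor
  · have := hf 0 (by omega)
    rw [hf0] at this
    exact this.1
  · have := hf (m - 1) (by omega)
    have he : m - 1 + 1 = m := by omega
    rw [he, hfm] at this
    exact this.2.1

lemma cycle_walk {n : ℕ} {S T : Finset ℕ} {s t : ℕ}
    (hsS : s ∈ S) (htT : t ∈ T) (hs1 : 1 ≤ s) (ht1 : 1 ≤ t) (hstn : s + t ≤ n) :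
    ∀ x y j : ℕ, x ∈ Finset.Icc 1 (s + t) → y ∈ Finset.Icc 1 (s + t) →
      (x + j * s) ≡ y [MOD (s + t)] → hasWalk n S T x y j := by
  intro x y j hx hy hcong
  set m := s + t with hm
  have hm2 : 2 ≤ m := by omega
  simp only [Finset.mem_Icc] at hx hy
  refine ⟨fun i => (x - 1 + i * s) % m + 1, ?_, ?_, ?_⟩
  · simp only [Nat.zero_mul, Nat.add_zero]
    rw [Nat.mod_eq_of_lt (by omega)]
    omega
  · have h1 : (x - 1 + j * s) ≡ (y - 1) [MOD m] := by
      have h0 : (x - 1 + j * s) + 1 ≡ (y - 1) + 1 [MOD m] := by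
        have e1 : (x - 1 + j * s) + 1 = x + j * s := by omega
        have e2 : (y - 1) + 1 = y := by omega
        rw [e1, e2]; exact hcong
      exact Nat.ModEq.add_right_cancel' 1 h0
    rw [Nat.ModEq] at h1
    rw [Nat.mod_eq_of_lt (show y - 1 < m by omega)] at h1
    show (x - 1 + j * s) % m + 1 = y
    omega
  · intro i _
    set r := (x - 1 + i * s) % m with hr
    have hrm : r < m := Nat.mod_lt _ (by omega)
    have hstep : (x - 1 + (i + 1) * s) % m = (r + s) % m := by
      have e : x - 1 + (i + 1) * s = (x - 1 + i * s) + s := by ring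
      rw [e, Nat.add_mod, ← hr, Nat.mod_eq_of_lt (show s < m by omega)]
    rcases lt_or_ge (r + s) m with hlt | hge
    · have h2 : (r + s) % m = r + s := Nat.mod_eq_of_lt hlt
      show arc n S T ((x - 1 + i * s) % m + 1) ((x - 1 + (i + 1) * s) % m + 1)
      rw [← hr, hstep, h2]
      refine ⟨?_, ?_, Or.inl ⟨s, hsS, ?_⟩⟩
      · simp only [Finset.mem_Icc]; omega
      · simp only [Finset.mem_Icc]; omega
      · omega
    · have hlt2 : r + s - m < m := by omega
      have h2 : (r + s) % m = r + s - m := by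
        rw [Nat.mod_eq_sub_mod hge, Nat.mod_eq_of_lt hlt2]
      show arc n S T ((x - 1 + i * s) % m + 1) ((x - 1 + (i + 1) * s) % m + 1)
      rw [← hr, hstep, h2]
      refine ⟨?_, ?_, Or.inr ⟨t, htT, ?_⟩⟩
      · simp only [Finset.mem_Icc]; omega
      · simp only [Finset.mem_Icc]; omega
      · omega

lemma descend {n : ℕ} {S T : Finset ℕ} {s t : ℕ}
    (htT : t ∈ T) (ht1 : 1 ≤ t) (hstn : s + t ≤ n) :
    ∀ u, u ∈ Finset.Icc 1 n → ∃ a u₀, u₀ ∈ Finset.Icc 1 (s + t) ∧ u = u₀ + a * t ∧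
      hasWalk n S T u u₀ a := by
  intro u
  induction u using Nat.strong_induction_on with
  | _ u ih =>
    intro hu
    simp only [Finset.mem_Icc] at hu
    rcases le_or_gt u (s + t) with h | h
    · exact ⟨0, u, by simp only [Finset.mem_Icc]; omega, by omega, walk_zero n S T u⟩
    · have hmem : u - t ∈ Finset.Icc 1 n := by simp only [Finset.mem_Icc]; omega
      obtain ⟨a, u₀, hu₀, heq, hw⟩ := ih (u - t) (by omega) hmem
      refine ⟨a + 1, u₀, hu₀, by rw [Nat.add_mul, Nat.one_mul]; omega, ?_⟩
      have harc : arc n S T u (u - t) := by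
        refine ⟨by simp only [Finset.mem_Icc]; omega, hmem, Or.inr ⟨t, htT, by omega⟩⟩
      have := walk_trans (walk_one harc) hw
      simpa [Nat.add_comm] using this

lemma ascend {n : ℕ} {S T : Finset ℕ} {s t : ℕ}
    (hsS : s ∈ S) (hs1 : 1 ≤ s) (hstn : s + t ≤ n) :
    ∀ v, v ∈ Finset.Icc 1 n → ∃ b v₀, v₀ ∈ Finset.Icc 1 (s + t) ∧ v = v₀ + b * s ∧
      hasWalk n S T v₀ v b := by
  intro v
  induction v using Nat.strong_induction_on with
  | _ v ih =>
    intro hv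
    simp only [Finset.mem_Icc] at hv
    rcases le_or_gt v (s + t) with h | h
    · exact ⟨0, v, by simp only [Finset.mem_Icc]; omega, by omega, walk_zero n S T v⟩
    · have hmem : v - s ∈ Finset.Icc 1 n := by simp only [Finset.mem_Icc]; omega
      obtain ⟨b, v₀, hv₀, heq, hw⟩ := ih (v - s) (by omega) hmem
      refine ⟨b + 1, v₀, hv₀, by rw [Nat.add_mul, Nat.one_mul]; omega, ?_⟩
      have harc : arc n S T (v - s) v := by
        refine ⟨hmem, by simp only [Finset.mem_Icc]; omega, Or.inl ⟨s, hsS, by omega⟩⟩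
      exact walk_trans hw (walk_one harc)

lemma pure_walk {n : ℕ} {S T : Finset ℕ} {s t : ℕ}
    (hsS : s ∈ S) (htT : t ∈ T) (hs1 : 1 ≤ s) (ht1 : 1 ≤ t) (hstn : s + t ≤ n)
    {u v ℓ : ℕ} (hu : u ∈ Finset.Icc 1 n) (hv : v ∈ Finset.Icc 1 n)
    (hℓ : 2 * n ≤ ℓ) (hcong : (u : ZMod (s + t)) + ℓ * s = v) :
    hasWalk n S T u v ℓ := by
  set m := s + t with hm
  obtain ⟨a, u₀, hu₀, hueq, hwa⟩ := descend (S := S) htT ht1 hstn u hu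
  obtain ⟨b, v₀, hv₀, hveq, hwb⟩ := ascend (T := T) hsS hs1 hstn v hv
  simp only [Finset.mem_Icc] at hu hv hu₀ hv₀
  have ha' : a ≤ a * t := Nat.le_mul_of_pos_right a (by omega)
  have hb' : b ≤ b * s := Nat.le_mul_of_pos_right b (by omega)
  have ha : a ≤ n - 1 := by omega
  have hb : b ≤ n - 1 := by omega
  have hn1 : 1 ≤ n := by omega
  have hab : a + b ≤ 2 * n - 2 := by omega
  set L := ℓ - a - b with hL
  have hLeq : a + (L + b) = ℓ := by omega
  have hcyc : hasWalk n S T u₀ v₀ L := by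
    apply cycle_walk hsS htT hs1 ht1 hstn u₀ v₀ L (by simp only [Finset.mem_Icc]; omega)
      (by simp only [Finset.mem_Icc]; omega)
    rw [← ZMod.natCast_eq_natCast_iff]
    have hLcast : (L : ZMod m) = (ℓ : ZMod m) - a - b := by
      have : (ℓ : ℕ) = L + a + b := by omega
      rw [this]; push_cast; ring
    have hm0 : (m : ZMod m) = 0 := ZMod.natCast_self m
    have hst0 : (s : ZMod m) + t = 0 := by
      rw [← Nat.cast_add, ← hm]; exact hm0
    have hu₀cast : (u₀ : ZMod m) = (u : ZMod m) - a * t := by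
      rw [hueq]; push_cast; ring
    have hv₀cast : (v₀ : ZMod m) = (v : ZMod m) - b * s := by
      rw [hveq]; push_cast; ring
    push_cast
    rw [hLcast, hu₀cast, hv₀cast, ← hcong]
    have : (t : ZMod m) = - s := by linear_combination hst0
    rw [this]
    ring
  have := walk_trans hwa (walk_trans hcyc hwb)
  rwa [hLeq] at this

lemma solve_len {s t : ℕ} (hs1 : 1 ≤ s) (ht1 : 1 ≤ t) (hcop : Nat.gcd s t = 1)
    (τ : ZMod (s + t)) (B : ℕ) :
    ∃ ℓ : ℕ, B ≤ ℓ ∧ ℓ ≤ B + (s + t) ∧ (ℓ : ZMod (s + t)) * s = τ := by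
  have hm2 : 2 ≤ s + t := by omega
  haveI : NeZero (s + t) := ⟨by omega⟩
  have hcop' : Nat.Coprime s (s + t) := by
    unfold Nat.Coprime; rw [Nat.add_comm, Nat.gcd_add_self_right]; exact hcop
  set U : (ZMod (s + t))ˣ := ZMod.unitOfCoprime s hcop' with hU
  have hUs : (U : ZMod (s + t)) = s := ZMod.coe_unitOfCoprime s hcop'
  set e : ZMod (s + t) := (τ - B * s) * (U⁻¹ : (ZMod (s + t))ˣ) with he
  refine ⟨B + e.val, by omega, by have := ZMod.val_lt e; omega, ?_⟩
  have hev : ((e.val : ℕ) : ZMod (s + t)) = e := by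
    have := ZMod.natCast_val (R := ZMod (s + t)) e
    simpa [ZMod.cast_id] using this
  push_cast
  rw [hev, he]
  have h1 : ((U⁻¹ : (ZMod (s + t))ˣ) : ZMod (s + t)) * s = 1 := by
    rw [← hUs, ← Units.val_mul, inv_mul_cancel, Units.val_one]
  calc ((B : ZMod (s + t)) + (τ - B * s) * (U⁻¹ : (ZMod (s + t))ˣ)) * s
      = (B : ZMod (s + t)) * s + (τ - B * s) * (((U⁻¹ : (ZMod (s + t))ˣ) : ZMod (s + t)) * s) := by
        ring
    _ = τ := by rw [h1]; ring

lemma loop_sub {n : ℕ} {S T : Finset ℕ} {s t : ℕ}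
    (hsS : s ∈ S) (htT : t ∈ T) (hs1 : 1 ≤ s) (ht1 : 1 ≤ t) (hstn : s + t ≤ n)
    (hcop : Nat.gcd s t = 1) (hSsub : S ⊆ Finset.Icc 1 (n - 1)) :
    ∀ s' ∈ S, ∃ ℓ, hasWalk n S T 1 1 ℓ ∧ (ℓ : ZMod (s + t)) * s = (s : ZMod (s + t)) - s' := by
  intro s' hs'
  have hs'n : 1 ≤ s' ∧ s' ≤ n - 1 := by
    have := hSsub hs'; simp only [Finset.mem_Icc] at this; exact this
  have hn1 : 2 ≤ n := by omega
  obtain ⟨L, hL1, hL2, hL3⟩ := solve_len hs1 ht1 hcop ((1 : ZMod (s+t)) - (1 + s')) (2 * n)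
  have harc : arc n S T 1 (1 + s') := by
    refine ⟨by simp only [Finset.mem_Icc]; omega, by simp only [Finset.mem_Icc]; omega,
      Or.inl ⟨s', hs', by push_cast; ring⟩⟩
  have hw2 : hasWalk n S T (1 + s') 1 L := by
    apply pure_walk hsS htT hs1 ht1 hstn (by simp only [Finset.mem_Icc]; omega)
      (by simp only [Finset.mem_Icc]; omega) hL1
    rw [hL3]; push_cast; ring
  refine ⟨1 + L, walk_trans (walk_one harc) hw2, ?_⟩
  push_cast
  rw [add_mul, one_mul, hL3]
  push_cast
  ring

lemma loop_add {n : ℕ} {S T : Finset ℕ} {s t : ℕ}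
    (hsS : s ∈ S) (htT : t ∈ T) (hs1 : 1 ≤ s) (ht1 : 1 ≤ t) (hstn : s + t ≤ n)
    (hcop : Nat.gcd s t = 1) (hTsub : T ⊆ Finset.Icc 1 (n - 1)) :
    ∀ t' ∈ T, ∃ ℓ, hasWalk n S T 1 1 ℓ ∧ (ℓ : ZMod (s + t)) * s = (s : ZMod (s + t)) + t' := by
  intro t' ht'
  have ht'n : 1 ≤ t' ∧ t' ≤ n - 1 := by
    have := hTsub ht'; simp only [Finset.mem_Icc] at this; exact this
  have hn1 : 2 ≤ n := by omega
  have h1I : (1 : ℕ) ∈ Finset.Icc 1 n := by simp only [Finset.mem_Icc]; omega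
  have hnI : n ∈ Finset.Icc 1 n := by simp only [Finset.mem_Icc]; omega
  have hntI : n - t' ∈ Finset.Icc 1 n := by simp only [Finset.mem_Icc]; omega
  obtain ⟨μ₁, hμ₁1, _, hμ₁3⟩ := solve_len hs1 ht1 hcop ((n : ZMod (s+t)) - 1) (2 * n)
  obtain ⟨L, hL1, _, hL3⟩ := solve_len hs1 ht1 hcop ((n : ZMod (s+t)) - (n - t' : ℕ)) (2 * n)
  obtain ⟨μ₂, hμ₂1, _, hμ₂3⟩ := solve_len hs1 ht1 hcop ((1 : ZMod (s+t)) - n) (2 * n)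
  have hw1 : hasWalk n S T 1 n μ₁ := by
    apply pure_walk hsS htT hs1 ht1 hstn h1I hnI hμ₁1
    rw [hμ₁3]; ring
  have harc : arc n S T n (n - t') := by
    refine ⟨hnI, hntI, Or.inr ⟨t', ht', by omega⟩⟩
  have hw2 : hasWalk n S T (n - t') n L := by
    apply pure_walk hsS htT hs1 ht1 hstn hntI hnI hL1
    rw [hL3]; ring
  have hw3 : hasWalk n S T n 1 μ₂ := by
    apply pure_walk hsS htT hs1 ht1 hstn hnI h1I hμ₂1
    rw [hμ₂3]; ring
  refine ⟨μ₁ + (1 + (L + μ₂)),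
    walk_trans hw1 (walk_trans (walk_one harc) (walk_trans hw2 hw3)), ?_⟩
  push_cast
  rw [add_mul, add_mul, add_mul, one_mul, hμ₁3, hL3, hμ₂3]
  have hnt : ((n - t' : ℕ) : ZMod (s + t)) = (n : ZMod (s + t)) - t' := by
    have : (n - t' : ℕ) + t' = n := by omega
    calc ((n - t' : ℕ) : ZMod (s + t)) = ((n - t' : ℕ) + (t' : ℕ) : ℕ) - (t' : ZMod (s+t)) := by
          push_cast; ring
      _ = (n : ZMod (s + t)) - t' := by rw [this]
  rw [hnt]
  ring

lemma dloop {n : ℕ} {S T : Finset ℕ} {s t : ℕ}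
    (hsS : s ∈ S) (htT : t ∈ T) (hs1 : 1 ≤ s) (ht1 : 1 ≤ t) (hstn : s + t ≤ n)
    (hcop : Nat.gcd s t = 1) (hSsub : S ⊆ Finset.Icc 1 (n - 1))
    (hTsub : T ⊆ Finset.Icc 1 (n - 1)) :
    ∃ Λ : ℕ, hasWalk n S T 1 1 Λ ∧
      (Λ : ZMod (s + t)) * s = ((sumGcd S T : ℕ) : ZMod (s + t)) := by
  classical
  set A : Set (ZMod (s + t)) :=
    {τ | ∃ ℓ, hasWalk n S T 1 1 ℓ ∧ (ℓ : ZMod (s + t)) * s = τ} with hA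
  suffices hmem : ((sumGcd S T : ℕ) : ZMod (s + t)) ∈ A by
    obtain ⟨Λ, h1, h2⟩ := hmem
    exact ⟨Λ, h1, h2⟩
  have hA0 : (0 : ZMod (s + t)) ∈ A := ⟨0, walk_zero n S T 1, by push_cast; ring⟩
  have hAadd : ∀ τ₁ ∈ A, ∀ τ₂ ∈ A, τ₁ + τ₂ ∈ A := by
    rintro τ₁ ⟨ℓ₁, hw₁, hc₁⟩ τ₂ ⟨ℓ₂, hw₂, hc₂⟩
    exact ⟨ℓ₁ + ℓ₂, walk_trans hw₁ hw₂, by push_cast; rw [add_mul, hc₁, hc₂]⟩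
  have hAnat : ∀ τ ∈ A, ∀ k : ℕ, (k : ZMod (s + t)) * τ ∈ A := by
    intro τ hτ k
    induction k with
    | zero => simpa using hA0
    | succ k ih =>
      have := hAadd _ ih _ hτ
      have he : ((k : ZMod (s + t)) * τ + τ) = ((k + 1 : ℕ) : ZMod (s + t)) * τ := by
        push_cast; ring
      rwa [he] at this
  have hAneg : ∀ τ ∈ A, -τ ∈ A := by
    intro τ hτ
    have h1 : ((s + t - 1 : ℕ) : ZMod (s + t)) = -1 := by
      have he : (s + t - 1 : ℕ) + 1 = s + t := by omega
      have : ((s + t - 1 : ℕ) : ZMod (s + t)) + 1 = ((s + t : ℕ) : ZMod (s + t)) := by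
        rw [← he]; push_cast; ring
      rw [ZMod.natCast_self] at this
      linear_combination this
    have := hAnat _ hτ (s + t - 1)
    rwa [h1, neg_one_mul] at this
  have hAint : ∀ τ ∈ A, ∀ c : ℤ, ((c : ZMod (s + t))) * τ ∈ A := by
    intro τ hτ c
    obtain ⟨k, rfl | rfl⟩ := Int.eq_nat_or_neg c
    · have := hAnat _ hτ k; rwa [show (((k : ℤ)) : ZMod (s+t)) = (k : ZMod (s+t)) by push_cast; rfl]
    · have := hAneg _ (hAnat _ hτ k)
      have he : -((k : ZMod (s + t)) * τ) = (((-(k : ℤ)) : ℤ) : ZMod (s + t)) * τ := by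
        push_cast; ring
      rwa [he] at this
  set f : ℕ ⊕ ℕ → ℤ := Sum.elim (fun s' => (s : ℤ) - s') (fun t' => (s : ℤ) + t') with hf
  have key : ∀ F : Finset (ℕ ⊕ ℕ), (∀ i ∈ F, ((f i : ℤ) : ZMod (s + t)) ∈ A) →
      ∃ g : ℕ, (((g : ℕ) : ZMod (s + t)) ∈ A) ∧ g ∣ (s + t) ∧ ∀ i ∈ F, (g : ℤ) ∣ f i := by
    intro F
    induction F using Finset.induction_on with
    | empty =>
      intro _
      exact ⟨s + t, by rw [ZMod.natCast_self]; exact hA0, dvd_rfl, by simp⟩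
    | @insert i F hiF ih =>
      intro hgen
      obtain ⟨g, hgA, hgm, hgF⟩ := ih (fun j hj => hgen j (Finset.mem_insert_of_mem hj))
      have hfiA : ((f i : ℤ) : ZMod (s + t)) ∈ A := hgen i (Finset.mem_insert_self i F)
      set g₂ : ℕ := Int.gcd (f i) (g : ℤ) with hg₂
      have hbez : (g₂ : ℤ) = f i * Int.gcdA (f i) (g : ℤ) + (g : ℤ) * Int.gcdB (f i) (g : ℤ) :=
        Int.gcd_eq_gcd_ab (f i) (g : ℤ)
      refine ⟨g₂, ?_, ?_, ?_⟩
      · have he : ((g₂ : ℕ) : ZMod (s + t)) =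
            ((Int.gcdA (f i) (g : ℤ) : ℤ) : ZMod (s + t)) * ((f i : ℤ) : ZMod (s + t)) +
            ((Int.gcdB (f i) (g : ℤ) : ℤ) : ZMod (s + t)) * ((g : ℕ) : ZMod (s + t)) := by
          have : ((g₂ : ℕ) : ZMod (s + t)) = (((g₂ : ℕ) : ℤ) : ZMod (s + t)) := by push_cast; rfl
          rw [this, hbez]; push_cast; ring
        rw [he]
        exact hAadd _ (hAint _ hfiA _) _ (hAint _ hgA _)
      · have h1 : (g₂ : ℤ) ∣ (g : ℤ) := Int.gcd_dvd_right _ _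
        exact dvd_trans (Int.natCast_dvd_natCast.mp h1) hgm
      · intro j hj
        rcases Finset.mem_insert.mp hj with rfl | hj'
        · exact Int.gcd_dvd_left _ _
        · exact dvd_trans (Int.gcd_dvd_right _ _) (hgF j hj')
  have hgen : ∀ i ∈ S.disjSum T, ((f i : ℤ) : ZMod (s + t)) ∈ A := by
    intro i hi
    rcases Finset.mem_disjSum.mp hi with ⟨a, ha, rfl⟩ | ⟨b, hb, rfl⟩
    · obtain ⟨ℓ, hw, hc⟩ := loop_sub hsS htT hs1 ht1 hstn hcop hSsub a ha
      refine ⟨ℓ, hw, ?_⟩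
      rw [hc, hf]; simp only [Sum.elim_inl, Sum.elim_inr]; push_cast; ring
    · obtain ⟨ℓ, hw, hc⟩ := loop_add hsS htT hs1 ht1 hstn hcop hTsub b hb
      refine ⟨ℓ, hw, ?_⟩
      rw [hc, hf]; simp only [Sum.elim_inl, Sum.elim_inr]; push_cast; ring
  obtain ⟨g, hgA, hgm, hgF⟩ := key (S.disjSum T) hgen
  have hgd : g ∣ sumGcd S T := by
    apply Finset.dvd_gcd
    intro p hp
    rw [Finset.mem_product] at hp
    have h1 : (g : ℤ) ∣ f (Sum.inl p.1) := hgF _ (Finset.inl_mem_disjSum.mpr hp.1)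
    have h2 : (g : ℤ) ∣ f (Sum.inr p.2) := hgF _ (Finset.inr_mem_disjSum.mpr hp.2)
    have h3 : (g : ℤ) ∣ ((p.1 + p.2 : ℕ) : ℤ) := by
      have he : ((p.1 + p.2 : ℕ) : ℤ) = f (Sum.inr p.2) - f (Sum.inl p.1) := by
        rw [hf]; simp only [Sum.elim_inl, Sum.elim_inr]; push_cast; ring
      rw [he]; exact dvd_sub h2 h1
    exact Int.natCast_dvd_natCast.mp h3
  obtain ⟨w, hw⟩ := hgd
  have hfin := hAint _ hgA (w : ℤ)
  have he : ((w : ℤ) : ZMod (s + t)) * ((g : ℕ) : ZMod (s + t))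
      = ((sumGcd S T : ℕ) : ZMod (s + t)) := by
    rw [hw]; push_cast; ring
  rwa [he] at hfin

lemma sumGcd_dvd {S T : Finset ℕ} {a b : ℕ} (ha : a ∈ S) (hb : b ∈ T) :
    sumGcd S T ∣ a + b := by
  have h : (a, b) ∈ S ×ˢ T := Finset.mem_product.mpr ⟨ha, hb⟩
  exact Finset.gcd_dvd h

lemma walk_congr {n : ℕ} {S T : Finset ℕ} {s t : ℕ}
    (hsS : s ∈ S) (htT : t ∈ T) :
    ∀ {m u v : ℕ}, hasWalk n S T u v m →
      (u : ZMod (sumGcd S T)) + m * s = (v : ZMod (sumGcd S T)) := by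
  intro m
  induction m with
  | zero =>
    intro u v h
    obtain ⟨f, hf0, hfm, _⟩ := h
    rw [← hf0, hfm]
    push_cast; ring
  | succ m ih =>
    intro u v h
    obtain ⟨f, hf0, hfm, hfarc⟩ := h
    have h1 : hasWalk n S T u (f m) m := ⟨f, hf0, rfl, fun i hi => hfarc i (by omega)⟩
    have h2 := ih h1
    have harc := hfarc m (by omega)
    rw [hfm] at harc
    obtain ⟨_, _, harc3⟩ := harc
    have hstep : ((f m : ℕ) : ZMod (sumGcd S T)) + s = v := by
      rcases harc3 with ⟨s', hs', heq⟩ | ⟨t', ht', heq⟩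
      · have hdvd1 : sumGcd S T ∣ s' + t :=
          sumGcd_dvd hs' htT
        have hdvd2 : sumGcd S T ∣ s + t :=
          sumGcd_dvd hsS htT
        have hz1 : ((s' + t : ℕ) : ZMod (sumGcd S T)) = 0 :=
          (ZMod.natCast_eq_zero_iff _ _).mpr hdvd1
        have hz2 : ((s + t : ℕ) : ZMod (sumGcd S T)) = 0 :=
          (ZMod.natCast_eq_zero_iff _ _).mpr hdvd2
        have hv : (v : ℤ) = (f m : ℤ) + s' := by omega
        have hvz : ((v : ℤ) : ZMod (sumGcd S T)) = (((f m : ℤ) + s' : ℤ) : ZMod (sumGcd S T)) := by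
          rw [hv]
        push_cast at hvz hz1 hz2 ⊢
        rw [hvz]
        linear_combination hz2 - hz1
      · have hdvd1 : sumGcd S T ∣ s + t' :=
          sumGcd_dvd hsS ht'
        have hz1 : ((s + t' : ℕ) : ZMod (sumGcd S T)) = 0 :=
          (ZMod.natCast_eq_zero_iff _ _).mpr hdvd1
        have hv : (v : ℤ) = (f m : ℤ) - t' := by omega
        have hvz : ((v : ℤ) : ZMod (sumGcd S T)) = (((f m : ℤ) - t' : ℤ) : ZMod (sumGcd S T)) := by
          rw [hv]
        push_cast at hvz hz1 ⊢
        rw [hvz]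
        linear_combination hz1
    rw [← hstep, ← h2]
    push_cast
    ring

lemma master {n : ℕ} {S T : Finset ℕ} {s t : ℕ}
    (hsS : s ∈ S) (htT : t ∈ T) (hSsub : S ⊆ Finset.Icc 1 (n - 1))
    (hTsub : T ⊆ Finset.Icc 1 (n - 1)) (hstn : s + t ≤ n) (hcop : Nat.gcd s t = 1) :
    ∃ M : ℕ, 0 < M ∧ ∀ ℓ : ℕ, M ≤ ℓ → ∀ u ∈ Finset.Icc 1 n, ∀ v ∈ Finset.Icc 1 n,
      ((u : ZMod (sumGcd S T)) + ℓ * s = v) → hasWalk n S T u v ℓ := by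
  have hsI := hSsub hsS
  have htI := hTsub htT
  simp only [Finset.mem_Icc] at hsI htI
  have hs1 : 1 ≤ s := hsI.1
  have ht1 : 1 ≤ t := htI.1
  have hn2 : 2 ≤ n := by omega
  have hd_dvd : sumGcd S T ∣ s + t :=
    sumGcd_dvd hsS htT
  have hd_pos : 0 < sumGcd S T := by
    rcases Nat.eq_zero_or_pos (sumGcd S T) with h | h
    · rw [h] at hd_dvd; omega
    · exact h
  obtain ⟨σ, hσ⟩ := hd_dvd
  have hσ1 : 1 ≤ σ ∧ σ ≤ s + t := by
    constructor
    · by_contra h; simp only [not_le, Nat.lt_one_iff] at h; rw [h] at hσ; omega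
    · calc σ ≤ sumGcd S T * σ := Nat.le_mul_of_pos_left σ hd_pos
        _ = s + t := hσ.symm
  obtain ⟨Λ, hΛw, hΛc⟩ := dloop hsS htT hs1 ht1 hstn hcop hSsub hTsub
  refine ⟨2 * n + (2 * n + (s + t)) + (s + t) * Λ + 1, by omega, ?_⟩
  intro ℓ hℓ u hu v hv hcong
  obtain ⟨L₁, hL₁a, hL₁b, hL₁c⟩ := solve_len hs1 ht1 hcop ((1 : ZMod (s + t)) - u) (2 * n)
  set ρ : ℤ := (ℓ : ℤ) * s - ((v : ℤ) - u) with hρ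
  have hdρ : ((sumGcd S T : ℕ) : ℤ) ∣ ρ := by
    rw [← ZMod.intCast_zmod_eq_zero_iff_dvd]
    rw [hρ]
    push_cast
    linear_combination hcong
  obtain ⟨ρ', hρ'⟩ := hdρ
  set k : ℕ := (ρ' % σ).toNat with hk
  have hσ0 : (0 : ℤ) < σ := by exact_mod_cast hσ1.1
  have hkval : (k : ℤ) = ρ' % σ := Int.toNat_of_nonneg (Int.emod_nonneg ρ' (by omega))
  have hklt : k < σ := by
    have := Int.emod_lt_of_pos ρ' hσ0
    omega
  have hkΛ : k * Λ ≤ (s + t) * Λ := Nat.mul_le_mul_right Λ (by omega)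
  set Lf : ℕ := ℓ - L₁ - k * Λ with hLf
  have hLfge : 2 * n ≤ Lf := by omega
  have hsum : L₁ + (k * Λ + Lf) = ℓ := by omega
  have hmod : ((k : ℤ) * ((sumGcd S T : ℕ) : ℤ)) ≡ ρ [ZMOD ((s + t : ℕ) : ℤ)] := by
    have h1 : (k : ℤ) ≡ ρ' [ZMOD (σ : ℤ)] := by
      show (k : ℤ) % σ = ρ' % σ
      rw [hkval]
      exact Int.emod_emod_of_dvd ρ' dvd_rfl
    have h2 := Int.ModEq.mul_right' (c := ((sumGcd S T : ℕ) : ℤ)) h1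
    have he1 : ((σ : ℤ)) * ((sumGcd S T : ℕ) : ℤ) = ((s + t : ℕ) : ℤ) := by
      rw [hσ]; push_cast; ring
    have he2 : (ρ' : ℤ) * ((sumGcd S T : ℕ) : ℤ) = ρ := by rw [hρ']; ring
    rw [he1, he2] at h2
    exact h2
  have hkd : ((k : ℤ) * ((sumGcd S T : ℕ) : ℤ) : ℤ) = ((ρ : ℤ) : ZMod (s + t)) := by
    exact_mod_cast (ZMod.intCast_eq_intCast_iff _ _ _).mpr hmod
  have hkd' : (k : ZMod (s + t)) * ((sumGcd S T : ℕ) : ZMod (s + t)) =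
      (ℓ : ZMod (s + t)) * s - v + u := by
    have h3 := hkd
    rw [hρ] at h3
    push_cast at h3
    linear_combination h3
  have hLfcast : (Lf : ZMod (s + t)) =
      (ℓ : ZMod (s + t)) - L₁ - (k : ZMod (s + t)) * Λ := by
    have he : ℓ = Lf + L₁ + k * Λ := by omega
    have : (ℓ : ZMod (s + t)) = ((Lf + L₁ + k * Λ : ℕ) : ZMod (s + t)) := by rw [← he]
    push_cast at this
    linear_combination - this
  have hw1 : hasWalk n S T u 1 L₁ := by
    apply pure_walk hsS htT hs1 ht1 hstn hu (by simp only [Finset.mem_Icc]; omega) hL₁a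
    rw [hL₁c]; push_cast; ring
  have hw2 : hasWalk n S T 1 1 (k * Λ) := walk_mul hΛw k
  have hw3 : hasWalk n S T 1 v Lf := by
    apply pure_walk hsS htT hs1 ht1 hstn (by simp only [Finset.mem_Icc]; omega) hv hLfge
    linear_combination (s : ZMod (s + t)) * hLfcast - (k : ZMod (s + t)) * hΛc - hkd' - hL₁c
  have := walk_trans hw1 (walk_trans hw2 hw3)
  rwa [hsum] at this

theorem stmt19 (n : ℕ) (S T : Finset ℕ)
    (hSsub : S ⊆ Finset.Icc 1 (n - 1)) (hTsub : T ⊆ Finset.Icc 1 (n - 1))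
    (s t : ℕ) (hsS : s ∈ S) (htT : t ∈ T)
    (hst : s + t ≤ n) (hcop : Nat.gcd s t = 1) :
    IsLeast {p : ℕ | 0 < p ∧ ∃ M : ℕ, ∀ m : ℕ, M ≤ m → ∀ u v : ℕ,
        (hasWalk n S T u v m ↔ hasWalk n S T u v (m + p))}
      (sumGcd S T / unionGcd S T) ∧
    (sumGcd S T = 1 → ∃ M : ℕ, ∀ m : ℕ, M ≤ m →
      ∀ u ∈ Finset.Icc 1 n, ∀ v ∈ Finset.Icc 1 n, hasWalk n S T u v m) := by
  have hsI := hSsub hsS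
  have htI := hTsub htT
  simp only [Finset.mem_Icc] at hsI htI
  have hs1 : 1 ≤ s := hsI.1
  have ht1 : 1 ≤ t := htI.1
  have hn2 : 2 ≤ n := by omega
  have hd_dvd : sumGcd S T ∣ s + t := sumGcd_dvd hsS htT
  have hd_pos : 0 < sumGcd S T := by
    rcases Nat.eq_zero_or_pos (sumGcd S T) with h | h
    · rw [h] at hd_dvd; omega
    · exact h
  have hu1 : unionGcd S T = 1 := by
    have h1 : unionGcd S T ∣ s := Finset.gcd_dvd (Finset.mem_union_left T hsS)
    have h2 : unionGcd S T ∣ t := Finset.gcd_dvd (Finset.mem_union_right S htT)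
    have h3 := Nat.dvd_gcd h1 h2
    rw [hcop] at h3
    exact Nat.dvd_one.mp h3
  rw [hu1, Nat.div_one]
  have hcds : Nat.Coprime (sumGcd S T) s := by
    have h1 : Nat.gcd (sumGcd S T) s ∣ s := Nat.gcd_dvd_right _ _
    have h2 : Nat.gcd (sumGcd S T) s ∣ s + t := dvd_trans (Nat.gcd_dvd_left _ _) hd_dvd
    have h4 := Nat.dvd_sub h2 h1
    have he : s + t - s = t := by omega
    rw [he] at h4
    have h5 := Nat.dvd_gcd h1 h4
    rw [hcop] at h5
    exact Nat.dvd_one.mp h5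
  obtain ⟨M₀, hM₀pos, hmaster⟩ := master hsS htT hSsub hTsub hst hcop
  constructor
  · constructor
    · refine ⟨hd_pos, M₀, ?_⟩
      intro m hm u v
      constructor
      · intro h
        have hends := walk_endpoints h (by omega)
        have hc := walk_congr hsS htT h
        apply hmaster (m + sumGcd S T) (by omega) u hends.1 v hends.2
        push_cast
        rw [ZMod.natCast_self]
        linear_combination hc
      · intro h
        have hends := walk_endpoints h (by omega)
        have hc := walk_congr hsS htT h
        apply hmaster m hm u hends.1 v hends.2
        push_cast at hc ⊢
        rw [ZMod.natCast_self] at hc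
        linear_combination hc
    · rintro q ⟨hq0, Mq, hMq⟩
      have hdq : sumGcd S T ∣ q := by
        set m₀ := sumGcd S T * (M₀ + Mq + 1) with hm₀
        have hm₀ge : M₀ + Mq + 1 ≤ m₀ := Nat.le_mul_of_pos_left _ hd_pos
        have h1I : (1 : ℕ) ∈ Finset.Icc 1 n := by simp only [Finset.mem_Icc]; omega
        have hw0 : hasWalk n S T 1 1 m₀ := by
          apply hmaster m₀ (by omega) 1 h1I 1 h1I
          have hz0 : ((m₀ : ℕ) : ZMod (sumGcd S T)) = 0 := by
            rw [hm₀]; push_cast; rw [ZMod.natCast_self]; ring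
          rw [hz0]; ring
        have hw1 := (hMq m₀ (by omega) 1 1).mp hw0
        have hc := walk_congr hsS htT hw1
        have hz : (((m₀ + q) * s : ℕ) : ZMod (sumGcd S T)) = 0 := by
          push_cast at hc ⊢
          linear_combination hc
        have hdvd := (ZMod.natCast_eq_zero_iff _ _).mp hz
        have hdm := hcds.dvd_of_dvd_mul_right hdvd
        have hdm₀ : sumGcd S T ∣ m₀ := ⟨M₀ + Mq + 1, rfl⟩
        exact (Nat.dvd_add_right hdm₀).mp hdm
      exact Nat.le_of_dvd hq0 hdq
  · intro hd1
    refine ⟨M₀, fun m hm u hu v hv => ?_⟩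
    apply hmaster m hm u hu v hv
    haveI : Subsingleton (ZMod (sumGcd S T)) := by rw [hd1]; infer_instance
    exact Subsingleton.elim _ _
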